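/- Let x_1 < y_1 < x_2 < ... < y_{n-1} < x_n be real numbers. Then the rational function G(z) = ∏_{i=1}^{n-1}(z - y_i) / ∏_{i=1}^{n}(z - x_i) has a partial fraction decomposition G(z) = ∑_{i=1}^{n} μ_i / (z - x_i) where each μ_i > 0 and ∑_{i=1}^{n} μ_i = 1. In other words, G is the Cauchy transform of a probability measure supported on {x_1, ..., x_n}. -/

import Mathlib

open Finset

open Polynomial in
private lemma coeff_lagrange_basis {n : ℕ} (x : Fin (n + 1) → ℝ)
    (hxinj : Function.Injective x) (i : Fin (n + 1)) :
    (Lagrange.basis univ x i).coeff n = Lagrange.nodalWeight univ x i := by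
  have hinjOn : Set.InjOn x (univ : Finset (Fin (n + 1))) := hxinj.injOn
  have hdeg : (Lagrange.basis univ x i).natDegree = n := by
    rw [Lagrange.natDegree_basis hinjOn (mem_univ i), card_univ, Fintype.card_fin]
    simp
  have h := Polynomial.coeff_natDegree (p := Lagrange.basis univ x i)
  rw [hdeg] at h
  rw [h]
  unfold Lagrange.basis Lagrange.nodalWeight
  rw [Polynomial.leadingCoeff_prod]
  refine prod_congr rfl fun j hj => ?_
  have hne : x i ≠ x j := fun h => (mem_erase.mp hj).1 (hxinj h).symm
  unfold Lagrange.basisDivisor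
  rw [Polynomial.leadingCoeff_mul, Polynomial.leadingCoeff_C,
    (Polynomial.monic_X_sub_C (x j)).leadingCoeff, mul_one]

/-- Partial fraction decomposition of `G(z) = ∏ (z - yⱼ) / ∏ (z - xᵢ)` for
interlacing sequences `x₀ < y₀ < x₁ < ⋯ < y_{n-1} < x_n`: the residues
`μ i = ∏ⱼ (xᵢ - yⱼ) / ∏_{j ≠ i} (xᵢ - xⱼ)` are positive, sum to `1`, and
`G(z) = ∑ μᵢ / (z - xᵢ)`; i.e. `G` is the Cauchy transform of a probability
measure supported on `{x₀, …, x_n}`. -/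
theorem cauchy_transform_partial_fraction (n : ℕ)
    (x : Fin (n + 1) → ℝ) (y : Fin n → ℝ)
    (hinter : ∀ i : Fin n, x i.castSucc < y i ∧ y i < x i.succ)
    (μ : Fin (n + 1) → ℝ)
    (hμ : ∀ i, μ i = (∏ j, (x i - y j)) / ∏ j ∈ univ.erase i, (x i - x j)) :
    (∀ i, 0 < μ i) ∧ (∑ i, μ i = 1) ∧
      ∀ z : ℝ, z ∉ Set.range x →
        (∏ j, (z - y j)) / (∏ i, (z - x i)) = ∑ i, μ i / (z - x i) := by
  classical
  have hx : StrictMono x := Fin.strictMono_iff_lt_succ.mpr fun i =>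
    (hinter i).1.trans (hinter i).2
  have hxinj : Function.Injective x := hx.injective
  have hinjOn : Set.InjOn x (univ : Finset (Fin (n + 1))) := hxinj.injOn
  -- rewrite erased products via succAbove
  have herase : ∀ (i : Fin (n + 1)) (f : Fin (n + 1) → ℝ),
      ∏ j ∈ univ.erase i, f j = ∏ j : Fin n, f (i.succAbove j) := by
    intro i f
    rw [← Finset.compl_singleton, ← Fin.image_succAbove_univ,
      prod_image (fun a _ b _ h => Fin.succAbove_right_injective h)]
  -- positivity
  have hpos : ∀ i, 0 < μ i := by
    intro i
    rw [hμ i, herase i, ← prod_div_distrib]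
    apply prod_pos
    intro j _
    rcases lt_or_ge j.castSucc i with h | h
    · rw [Fin.succAbove_of_castSucc_lt _ _ h]
      have h1 : j.succ ≤ i := Fin.castSucc_lt_iff_succ_le.mp h
      have h2 : x j.succ ≤ x i := hx.monotone h1
      have h3 : x j.castSucc < x i := hx h
      have h4 := (hinter j).2
      exact div_pos (by linarith) (by linarith)
    · rw [Fin.succAbove_of_le_castSucc _ _ h]
      have h2 : x i ≤ x j.castSucc := hx.monotone h
      have h3 : x i < x j.succ := hx (h.trans_lt (Fin.castSucc_lt_succ (i := j)))
      have h4 := (hinter j).1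
      exact div_pos_iff.mpr (Or.inr ⟨by linarith, by linarith⟩)
  -- the interpolation polynomial
  open Polynomial in
  refine ⟨hpos, ?_, ?_⟩ <;>
  · set P : ℝ[X] := Lagrange.nodal univ y with hP
    have hPdeg : P.degree < #(univ : Finset (Fin (n + 1))) := by
      rw [hP, Lagrange.degree_nodal, card_univ, card_univ, Fintype.card_fin,
        Fintype.card_fin]
      exact_mod_cast lt_add_one n
    have hevalP : ∀ t : ℝ, P.eval t = ∏ j, (t - y j) := by
      intro t; rw [hP, Lagrange.eval_nodal]
    have hmu : ∀ i, μ i = Lagrange.nodalWeight univ x i * P.eval (x i) := by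
      intro i
      rw [hμ i, hevalP, Lagrange.nodalWeight, div_eq_mul_inv, ← prod_inv_distrib,
        mul_comm]
    have hinterp : P = Lagrange.interpolate univ x fun i => P.eval (x i) :=
      Lagrange.eq_interpolate hinjOn hPdeg
    first
    | -- sum of residues is 1
      have h1 : P.coeff n = 1 := by
        have : P.natDegree = n := by
          rw [hP, Lagrange.natDegree_nodal, card_univ, Fintype.card_fin]
        rw [← this]
        exact (Lagrange.nodal_monic).coeff_natDegree
      calc ∑ i, μ i
          = ∑ i, P.eval (x i) * (Lagrange.basis univ x i).coeff n := by
            refine Finset.sum_congr rfl fun i _ => ?_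
            rw [hmu i, coeff_lagrange_basis x hxinj i, mul_comm]
        _ = (Lagrange.interpolate univ x fun i => P.eval (x i)).coeff n := by
            rw [Lagrange.interpolate_apply, Polynomial.finset_sum_coeff]
            exact Finset.sum_congr rfl fun i _ => by
              rw [Polynomial.coeff_C_mul]
        _ = 1 := by rw [← hinterp, h1]
    | -- partial fraction decomposition
      intro z hz
      have hz' : ∀ i ∈ (univ : Finset (Fin (n + 1))), z ≠ x i := by
        intro i _ h; exact hz ⟨i, h.symm⟩
      have hnodal : (Lagrange.nodal univ x).eval z = ∏ i, (z - x i) :=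
        Lagrange.eval_nodal
      have hnz : (∏ i, (z - x i)) ≠ 0 := by
        rw [← hnodal]; exact Lagrange.eval_nodal_not_at_node hz'
      have key := Lagrange.eval_interpolate_not_at_node
        (s := univ) (v := x) (fun i => P.eval (x i)) hz'
      rw [← hinterp, hevalP, hnodal] at key
      rw [key, mul_div_cancel_left₀ _ hnz]
      refine Finset.sum_congr rfl fun i _ => ?_
      rw [hmu i, div_eq_mul_inv]
      ring
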